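/- Let x_1, ..., x_m be points in R^n in linearly general position (every subset of size at most n is linearly independent). Then the origin lies in conv{x_1, ..., x_m} if and only if the origin lies in the relative interior of conv{x_1, ..., x_m}. -/

import Mathlib

theorem mem_convexHull_iff_mem_intrinsicInterior (m n : ℕ) (hm : 1 ≤ m)
    (x : Fin m → EuclideanSpace ℝ (Fin n))
    (hgen : ∀ s : Finset (Fin m), s.card ≤ n →
      LinearIndependent ℝ (fun i : s => x i)) :
    (0 : EuclideanSpace ℝ (Fin n)) ∈ convexHull ℝ (Set.range x) ↔
      (0 : EuclideanSpace ℝ (Fin n)) ∈ intrinsicInterior ℝ (convexHull ℝ (Set.range x)) := by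
  classical
  constructor
  · intro h
    have hconv := convex_convexHull ℝ (Set.range x)
    rw [convexHull_range_eq_exists_affineCombination] at h
    obtain ⟨s, w, hw0, hw1, hs⟩ := h
    rw [s.affineCombination_eq_linear_combination x w hw1] at hs
    set S : Finset (Fin m) := s.filter (fun i => w i ≠ 0) with hSdef
    have hSw : ∀ i ∈ S, 0 < w i := fun i hi => by
      rw [hSdef, Finset.mem_filter] at hi
      exact lt_of_le_of_ne (hw0 i hi.1) (Ne.symm hi.2)
    have hS1 : ∑ i ∈ S, w i = 1 := by
      rw [hSdef, Finset.sum_filter_ne_zero]; exact hw1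
    have hSx : ∑ i ∈ S, w i • x i = (0 : EuclideanSpace ℝ (Fin n)) := by
      rw [hSdef, Finset.sum_filter_of_ne, hs]
      intro i _ hne h0
      exact hne (by simp [h0])
    have hSne : S.Nonempty := by
      rcases Finset.eq_empty_or_nonempty S with hE | hNE
      · rw [hE, Finset.sum_empty] at hS1; norm_num at hS1
      · exact hNE
    obtain ⟨i0, hi0⟩ := hSne
    haveI : Nonempty ↥S := ⟨⟨i0, hi0⟩⟩
    have hsum' : ∑ i : ↥S, w ↑i = 1 := by
      rw [Finset.univ_eq_attach, Finset.sum_attach]; exact hS1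
    have h0' : ∑ i : ↥S, w ↑i • x ↑i = (0 : EuclideanSpace ℝ (Fin n)) := by
      rw [Finset.univ_eq_attach]
      exact (Finset.sum_attach S fun i => w i • x i).trans hSx
    -- Step A : n < S.card
    have hcard : n < S.card := by
      by_contra hle
      push_neg at hle
      have li := hgen S hle
      have := Fintype.linearIndependent_iff.1 li (fun i => w ↑i) h0' ⟨i0, hi0⟩
      exact (hSw i0 hi0).ne' this
    -- Step B : span of the points of S is everything
    obtain ⟨T, hTS, hTcard⟩ := Finset.exists_subset_card_eq hcard.le
    have liT := hgen T hTcard.le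
    have hspanT : Submodule.span ℝ (Set.range fun i : T => x ↑i) = ⊤ :=
      liT.span_eq_top_of_card_eq_finrank'
        (by simp [Fintype.card_coe, hTcard, finrank_euclideanSpace_fin])
    have hspan : Submodule.span ℝ (Set.range fun i : S => x ↑i) = ⊤ := by
      refine top_unique ?_
      rw [← hspanT]
      refine Submodule.span_mono ?_
      rintro _ ⟨i, rfl⟩
      exact ⟨⟨↑i, hTS i.2⟩, rfl⟩
    -- Step C : open mapping argument
    set f : (↥S → ℝ) →ₗ[ℝ] EuclideanSpace ℝ (Fin n) :=
      Fintype.linearCombination ℝ (fun i : S => x ↑i) with hfdef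
    have hfapp : ∀ c : ↥S → ℝ, f c = ∑ i : ↥S, c i • x ↑i := fun c => by
      simp [hfdef, Fintype.linearCombination_apply]
    have hfsurj : Function.Surjective f := by
      intro y
      have hy : y ∈ Submodule.span ℝ (Set.range fun i : S => x ↑i) := by
        rw [hspan]; trivial
      obtain ⟨c, hc⟩ := (Submodule.mem_span_range_iff_exists_fun ℝ).1 hy
      exact ⟨c, by rw [hfapp]; exact hc⟩
    set F := LinearMap.toContinuousLinearMap f with hFdef
    have hFopen : IsOpenMap F := F.isOpenMap hfsurj
    set U : Set (↥S → ℝ) := {c | (∀ i, 0 < c i) ∧ ∑ i, c i < 1} with hUdef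
    have hUopen : IsOpen U := by
      have h1 : IsOpen {c : ↥S → ℝ | ∀ i, 0 < c i} := by
        have he : {c : ↥S → ℝ | ∀ i, 0 < c i} = ⋂ i, {c | 0 < c i} := by
          ext c; simp
        rw [he]
        exact isOpen_iInter_of_finite fun i =>
          isOpen_lt continuous_const (continuous_apply i)
      have h2 : IsOpen {c : ↥S → ℝ | ∑ i, c i < 1} :=
        isOpen_lt (by fun_prop) continuous_const
      have : U = {c : ↥S → ℝ | ∀ i, 0 < c i} ∩ {c : ↥S → ℝ | ∑ i, c i < 1} := rfl
      rw [this]; exact h1.inter h2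
    have hmemU : (fun i : ↥S => w ↑i / 2) ∈ U := by
      refine ⟨fun i => half_pos (hSw ↑i i.2), ?_⟩
      rw [← Finset.sum_div, hsum']
      norm_num
    have hF0 : F (fun i : ↥S => w ↑i / 2) = 0 := by
      show f (fun i : ↥S => w ↑i / 2) = 0
      rw [hfapp]
      have he : ∀ i : ↥S, (w ↑i / 2) • x ↑i = (2⁻¹ : ℝ) • (w ↑i • x ↑i) := fun i => by
        rw [smul_smul]; ring_nf
      rw [Finset.sum_congr rfl fun i _ => he i, ← Finset.smul_sum, h0', smul_zero]
    have h0conv : (0 : EuclideanSpace ℝ (Fin n)) ∈ convexHull ℝ (Set.range x) := by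
      rw [convexHull_range_eq_exists_affineCombination]
      exact ⟨s, w, hw0, hw1, by rw [s.affineCombination_eq_linear_combination x w hw1, hs]⟩
    have hsub : F '' U ⊆ convexHull ℝ (Set.range x) := by
      rintro _ ⟨c, hc, rfl⟩
      obtain ⟨hcpos, hcsum⟩ := hc
      have ht0 : 0 < ∑ i : ↥S, c i := Finset.sum_pos (fun i _ => hcpos i) Finset.univ_nonempty
      set t := ∑ i : ↥S, c i with htdef
      have hcm : Finset.univ.centerMass c (fun i : ↥S => x ↑i) ∈ convexHull ℝ (Set.range x) :=
        Finset.centerMass_mem_convexHull _ (fun i _ => (hcpos i).le) ht0 (fun i _ => ⟨↑i, rfl⟩)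
      have hFc : F c = t • Finset.univ.centerMass c (fun i : ↥S => x ↑i)
          + (1 - t) • (0 : EuclideanSpace ℝ (Fin n)) := by
        show f c = _
        rw [hfapp, Finset.centerMass, smul_zero, add_zero, smul_smul,
          mul_inv_cancel₀ ht0.ne', one_smul]
      rw [hFc]
      exact hconv hcm h0conv ht0.le (by linarith) (by ring)
    have hint : (0 : EuclideanSpace ℝ (Fin n)) ∈ interior (convexHull ℝ (Set.range x)) :=
      interior_maximal hsub (hFopen U hUopen) ⟨_, hmemU, hF0⟩
    exact interior_subset_intrinsicInterior hint
  · exact fun h => intrinsicInterior_subset h
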